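/- Let 𝓕 be a finite family of nonempty subsets of [r] with [r] ∈ 𝓕. Then the affine hull of Δ_𝓕 has dimension r − 1, and for every nonempty proper subset G ⊊ [r], the face {x ∈ Δ_𝓕 : Σ_{i∈G} x_i = |{F ∈ 𝓕 : F ⊆ G}|} of Δ_𝓕 has affine-hull dimension r − 2 (i.e., is a facet) if and only if G belongs to the building closure 𝓕̂ of 𝓕. -/

import Mathlib

open Finset Pointwise

/-- The 0/1 indicator vector (in `ℝ^n`) of a finite set of coordinates. -/
def indVec {n : ℕ} (S : Finset (Fin n)) : Fin n → ℝ := fun i => if i ∈ S then 1 else 0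

/-- Independence with respect to a family `𝔅` of bases: being contained in a basis. -/
def FamIndep {n : ℕ} (𝔅 : Finset (Finset (Fin n))) (I : Finset (Fin n)) : Prop :=
  ∃ B ∈ 𝔅, I ⊆ B

/-- Circuits of the family `𝔅`: minimal dependent sets. -/
def FamCircuit {n : ℕ} (𝔅 : Finset (Finset (Fin n))) (C : Finset (Fin n)) : Prop :=
  ¬ FamIndep 𝔅 C ∧ ∀ D ⊂ C, FamIndep 𝔅 D

open scoped Classical in
/-- The rank of a set: maximal cardinality of an independent subset. -/
noncomputable def famRk {n : ℕ} (𝔅 : Finset (Finset (Fin n))) (F : Finset (Fin n)) : ℕ :=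
  (F.powerset.filter (fun I => FamIndep 𝔅 I)).sup Finset.card

open scoped Classical in
/-- The bases of the restriction to `F`: the maximal independent subsets of `F`. -/
noncomputable def famRestrictBases {n : ℕ} (𝔅 : Finset (Finset (Fin n)))
    (F : Finset (Fin n)) : Finset (Finset (Fin n)) :=
  F.powerset.filter fun B =>
    FamIndep 𝔅 B ∧ ∀ B' ⊆ F, FamIndep 𝔅 B' → B ⊆ B' → B = B'

open scoped Classical in
/-- The bases of the contraction by `F`: the sets `B \ F` where `B` is a basis meeting `F`
in a set of full rank `rk F`. -/
noncomputable def famContractBases {n : ℕ} (𝔅 : Finset (Finset (Fin n)))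
    (F : Finset (Fin n)) : Finset (Finset (Fin n)) :=
  (𝔅.filter fun B => (B ∩ F).card = famRk 𝔅 F).image (· \ F)

/-- `i` and `j` are related if equal or contained in a common circuit. -/
def FamConnRel {n : ℕ} (𝔅 : Finset (Finset (Fin n))) (i j : Fin n) : Prop :=
  i = j ∨ ∃ C, FamCircuit 𝔅 C ∧ i ∈ C ∧ j ∈ C

/-- Number of connected components: number of classes of the equivalence relation
generated by `FamConnRel`. -/
noncomputable def famNumComponents {n : ℕ} (𝔅 : Finset (Finset (Fin n))) : ℕ :=
  Nat.card (Quot (FamConnRel 𝔅))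

/-- Connectedness of the matroid presented by bases `𝔅` on the ground set `E`:
any two distinct elements of `E` lie in a common circuit (within `E`). -/
def FamConnectedOn {n : ℕ} (𝔅 : Finset (Finset (Fin n))) (E : Finset (Fin n)) : Prop :=
  ∀ i ∈ E, ∀ j ∈ E, i ≠ j → ∃ C, C ⊆ E ∧ FamCircuit 𝔅 C ∧ i ∈ C ∧ j ∈ C

/-- A matroid of rank `r` on the ground set `Fin n`, given by its collection of bases:
`r`-element sets satisfying the basis exchange axiom. -/
structure FinMatroid (n r : ℕ) where
  bases : Finset (Finset (Fin n))
  bases_nonempty : bases.Nonempty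
  card_bases : ∀ B ∈ bases, B.card = r
  exchange : ∀ B₁ ∈ bases, ∀ B₂ ∈ bases, ∀ i ∈ B₁ \ B₂,
      ∃ j ∈ B₂ \ B₁, insert j (B₁.erase i) ∈ bases

namespace FinMatroid

variable {n r : ℕ}

def Indep (M : FinMatroid n r) (I : Finset (Fin n)) : Prop := FamIndep M.bases I

def IsCircuit (M : FinMatroid n r) (C : Finset (Fin n)) : Prop := FamCircuit M.bases C

noncomputable def rk (M : FinMatroid n r) (F : Finset (Fin n)) : ℕ := famRk M.bases F

/-- A flat: no circuit leaves exactly one element outside `F`. -/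
def IsFlat (M : FinMatroid n r) (F : Finset (Fin n)) : Prop :=
  ∀ C, M.IsCircuit C → (C \ F).card ≠ 1

open scoped Classical in
/-- Closure of a set: the intersection of all flats containing it (the smallest flat
containing it). -/
noncomputable def closure (M : FinMatroid n r) (S : Finset (Fin n)) : Finset (Fin n) :=
  Finset.univ.filter fun i => ∀ F, M.IsFlat F → S ⊆ F → i ∈ F

/-- No single element is dependent. -/
def Loopless (M : FinMatroid n r) : Prop := ∀ i : Fin n, M.Indep {i}

noncomputable def numComponents (M : FinMatroid n r) : ℕ := famNumComponents M.bases

/-- Any two distinct elements lie in a common circuit. -/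
def Connected (M : FinMatroid n r) : Prop :=
  ∀ i j : Fin n, i ≠ j → ∃ C, M.IsCircuit C ∧ i ∈ C ∧ j ∈ C

/-- `B` is a `w`-maximal basis of `M`. -/
def IsMaxBasis (M : FinMatroid n r) (w : Fin n → ℝ) (B : Finset (Fin n)) : Prop :=
  B ∈ M.bases ∧ ∀ B' ∈ M.bases, ∑ i ∈ B', w i ≤ ∑ i ∈ B, w i

open scoped Classical in
/-- The bases of the matroid `M_w`: the `w`-maximal bases of `M`. -/
noncomputable def maxBases (M : FinMatroid n r) (w : Fin n → ℝ) :
    Finset (Finset (Fin n)) :=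
  M.bases.filter fun B => ∀ B' ∈ M.bases, ∑ i ∈ B', w i ≤ ∑ i ∈ B, w i

/-- Membership in the Bergman fan: on every circuit the minimum of `w` is attained
at least twice. -/
def InBergmanFan (M : FinMatroid n r) (w : Fin n → ℝ) : Prop :=
  ∀ C, M.IsCircuit C → ∃ i ∈ C, ∃ j ∈ C, i ≠ j ∧ w i = w j ∧ ∀ k ∈ C, w i ≤ w k

/-- The matroid polytope: convex hull of the indicator vectors of the bases. -/
noncomputable def polytope (M : FinMatroid n r) : Set (Fin n → ℝ) :=
  convexHull ℝ (indVec '' ↑M.bases)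

noncomputable def restrictBases (M : FinMatroid n r) (F : Finset (Fin n)) :
    Finset (Finset (Fin n)) :=
  famRestrictBases M.bases F

noncomputable def contractBases (M : FinMatroid n r) (F : Finset (Fin n)) :
    Finset (Finset (Fin n)) :=
  famContractBases M.bases F

/-- `𝓖` is a building set in the lattice of flats of `M` (with bottom element `∅` and
join = closure of union): for every nonempty flat `X`, the join map is an order
isomorphism from the product of the lower intervals of the maximal elements of
`𝓖` below `X` onto the lower interval of `X`. -/
def IsFlatBuilding (M : FinMatroid n r) (𝓖 : Set (Finset (Fin n))) : Prop :=
  (∀ F ∈ 𝓖, M.IsFlat F ∧ F ≠ ∅) ∧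
  ∀ X, M.IsFlat X → X ≠ ∅ →
    ∃ (k : ℕ) (g : Fin k → Finset (Fin n)),
      Function.Injective g ∧
      (∀ i, g i ∈ 𝓖 ∧ g i ⊆ X) ∧
      (∀ i, ∀ H ∈ 𝓖, H ⊆ X → g i ⊆ H → g i = H) ∧
      (∀ H ∈ 𝓖, H ⊆ X → ∃ i, H ⊆ g i) ∧
      ∃ e : (∀ i : Fin k, {F : Finset (Fin n) // M.IsFlat F ∧ F ⊆ g i}) ≃o
              {F : Finset (Fin n) // M.IsFlat F ∧ F ⊆ X},
        ∀ y, (e y).1 = M.closure (Finset.univ.sup fun i => (y i).1)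

/-- `S` is nested with respect to `𝓖` (in the lattice of flats of `M`): `S ⊆ 𝓖` and for
every subcollection of at least two pairwise incomparable members, their join (the
closure of their union) is not in `𝓖`. -/
def IsNested (M : FinMatroid n r) (𝓖 : Set (Finset (Fin n)))
    (S : Finset (Finset (Fin n))) : Prop :=
  ↑S ⊆ 𝓖 ∧ ∀ T ⊆ S, 2 ≤ T.card →
    (∀ A ∈ T, ∀ B ∈ T, A ≠ B → ¬ A ⊆ B ∧ ¬ B ⊆ A) →
    M.closure (T.sup id) ∉ 𝓖

end FinMatroid

/-- A building set in the Boolean lattice of subsets of `Fin r`: for every nonempty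
`X ⊆ [r]`, the union map is an order isomorphism from the product of the lower
intervals of the maximal elements of `𝓕` below `X` onto the lower interval of `X`. -/
def BoolBuilding {r : ℕ} (𝓕 : Set (Finset (Fin r))) : Prop :=
  (∀ F ∈ 𝓕, F ≠ ∅) ∧
  ∀ X : Finset (Fin r), X ≠ ∅ →
    ∃ (k : ℕ) (g : Fin k → Finset (Fin r)),
      Function.Injective g ∧
      (∀ i, g i ∈ 𝓕 ∧ g i ⊆ X) ∧
      (∀ i, ∀ H ∈ 𝓕, H ⊆ X → g i ⊆ H → g i = H) ∧
      (∀ H ∈ 𝓕, H ⊆ X → ∃ i, H ⊆ g i) ∧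
      ∃ e : (∀ i : Fin k, {F : Finset (Fin r) // F ⊆ g i}) ≃o
              {F : Finset (Fin r) // F ⊆ X},
        ∀ y, (e y).1 = Finset.univ.sup fun i => (y i).1

/-- `S` is nested with respect to `𝓕` in the Boolean lattice: for every subcollection
of at least two pairwise incomparable members, their union is not in `𝓕`. -/
def BoolNested {r : ℕ} (𝓕 : Set (Finset (Fin r))) (S : Finset (Finset (Fin r))) : Prop :=
  ↑S ⊆ 𝓕 ∧ ∀ T ⊆ S, 2 ≤ T.card →
    (∀ A ∈ T, ∀ B ∈ T, A ≠ B → ¬ A ⊆ B ∧ ¬ B ⊆ A) →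
    T.sup id ∉ 𝓕

/-- The simplex `Δ_F = conv{e_i : i ∈ F}`. -/
noncomputable def faceSimplex {r : ℕ} (F : Finset (Fin r)) : Set (Fin r → ℝ) :=
  convexHull ℝ ((fun i => (Pi.single i 1 : Fin r → ℝ)) '' ↑F)

/-- The Minkowski sum `Δ_𝓕 = Σ_{F ∈ 𝓕} Δ_F`. -/
noncomputable def minkSum {r : ℕ} (𝓕 : Finset (Finset (Fin r))) : Set (Fin r → ℝ) :=
  ∑ F ∈ 𝓕, faceSimplex F
namespace Statement10Aux

variable {r : ℕ}

noncomputable def ev (i : Fin r) : Fin r → ℝ := Pi.single i 1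

lemma ev_apply (i j : Fin r) : ev i j = if j = i then 1 else 0 := by
  simp [ev, Pi.single_apply]

lemma sum_ev (i : Fin r) : ∑ j, ev i j = 1 := by
  simp [ev_apply]

/-- membership in a finset-indexed sum of sets -/
lemma mem_finsetSum {ι V : Type*} [AddCommMonoid V] (s : Finset ι) (f : ι → Set V) (x : V) :
    x ∈ ∑ i ∈ s, f i ↔ ∃ g : ι → V, (∀ i ∈ s, g i ∈ f i) ∧ x = ∑ i ∈ s, g i := by
  classical
  induction s using Finset.cons_induction generalizing x with
  | empty =>
    simp only [Finset.sum_empty]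
    constructor
    · rintro h
      rw [Set.mem_zero] at h
      exact ⟨0, by simp, h⟩
    · rintro ⟨g, -, rfl⟩
      rw [Set.mem_zero]
  | cons a s ha ih =>
    rw [Finset.sum_cons, Set.mem_add]
    constructor
    · rintro ⟨u, hu, v, hv, rfl⟩
      obtain ⟨g, hg, rfl⟩ := (ih v).1 hv
      refine ⟨fun i => if i = a then u else g i, ?_, ?_⟩
      · intro i hi
        rcases Finset.mem_cons.1 hi with rfl | hi2
        · simpa using hu
        · have hne : i ≠ a := fun h => ha (h ▸ hi2)
          show (if i = a then u else g i) ∈ f i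
          rw [if_neg hne]; exact hg i hi2
      · rw [Finset.sum_cons]
        show u + ∑ i ∈ s, g i
            = (if a = a then u else g a) + ∑ i ∈ s, (if i = a then u else g i)
        rw [if_pos rfl]
        congr 1
        exact Finset.sum_congr rfl fun i hi =>
          (if_neg (show i ≠ a by rintro rfl; exact ha hi)).symm
    · rintro ⟨g, hg, rfl⟩
      rw [Finset.sum_cons]
      exact ⟨g a, hg a (Finset.mem_cons_self a s), _,
        (ih _).2 ⟨g, fun i hi => hg i (Finset.mem_cons_of_mem hi), rfl⟩, rfl⟩

lemma finsetSum_nonempty {ι V : Type*} [AddCommMonoid V] (s : Finset ι) (f : ι → Set V)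
    (hf : ∀ i ∈ s, (f i).Nonempty) : (∑ i ∈ s, f i).Nonempty := by
  classical
  refine ⟨_, (mem_finsetSum s f _).2
    ⟨fun i => if h : i ∈ s then (hf i h).some else 0, fun i hi => ?_, rfl⟩⟩
  simp only [dif_pos hi]
  exact (hf i hi).some_mem

lemma vectorSpan_add {V : Type*} [AddCommGroup V] [Module ℝ V] (s t : Set V)
    (hs : s.Nonempty) (ht : t.Nonempty) :
    vectorSpan ℝ (s + t) = vectorSpan ℝ s ⊔ vectorSpan ℝ t := by
  apply le_antisymm
  · rw [vectorSpan_def, Submodule.span_le]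
    rintro v hv
    rw [Set.mem_vsub] at hv
    obtain ⟨p, hp, q, hq, rfl⟩ := hv
    obtain ⟨a, ha, b, hb, rfl⟩ := hp
    obtain ⟨a', ha', b', hb', rfl⟩ := hq
    have : (a + b) -ᵥ (a' + b') = (a -ᵥ a') + (b -ᵥ b') := by
      simp [vsub_eq_sub]; abel
    rw [this]
    exact Submodule.add_mem _ (Submodule.mem_sup_left (vsub_mem_vectorSpan ℝ ha ha'))
      (Submodule.mem_sup_right (vsub_mem_vectorSpan ℝ hb hb'))
  · obtain ⟨a₀, ha₀⟩ := hs
    obtain ⟨b₀, hb₀⟩ := ht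
    refine sup_le ?_ ?_
    · rw [vectorSpan_def, Submodule.span_le]
      rintro v hv
      rw [Set.mem_vsub] at hv
      obtain ⟨a, ha, a', ha', rfl⟩ := hv
      have : a -ᵥ a' = (a + b₀) -ᵥ (a' + b₀) := by simp [vsub_eq_sub]
      rw [this]
      exact vsub_mem_vectorSpan ℝ (Set.add_mem_add ha hb₀) (Set.add_mem_add ha' hb₀)
    · rw [vectorSpan_def, Submodule.span_le]
      rintro v hv
      rw [Set.mem_vsub] at hv
      obtain ⟨b, hb, b', hb', rfl⟩ := hv
      have : b -ᵥ b' = (a₀ + b) -ᵥ (a₀ + b') := by simp [vsub_eq_sub]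
      rw [this]
      exact vsub_mem_vectorSpan ℝ (Set.add_mem_add ha₀ hb) (Set.add_mem_add ha₀ hb')

lemma vectorSpan_finsetSum {ι V : Type*} [AddCommGroup V] [Module ℝ V]
    (s : Finset ι) (f : ι → Set V) (hf : ∀ i ∈ s, (f i).Nonempty) :
    vectorSpan ℝ (∑ i ∈ s, f i) = s.sup fun i => vectorSpan ℝ (f i) := by
  classical
  induction s using Finset.cons_induction with
  | empty =>
    simp only [Finset.sum_empty, Finset.sup_empty]
    have : (0 : Set V) = {0} := rfl
    rw [this, vectorSpan_def]
    simp
  | cons a s ha ih =>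
    rw [Finset.sum_cons, Finset.sup_cons,
      vectorSpan_add _ _ (hf a (Finset.mem_cons_self a s))
        (finsetSum_nonempty s f fun i hi => hf i (Finset.mem_cons_of_mem hi)),
      ih fun i hi => hf i (Finset.mem_cons_of_mem hi)]

/-- the submodule of vectors supported on `F` with coordinate sum zero -/
def W0 (F : Finset (Fin r)) : Submodule ℝ (Fin r → ℝ) where
  carrier := {x | (∀ i, i ∉ F → x i = 0) ∧ ∑ i, x i = 0}
  add_mem' := by
    rintro x y ⟨hx1, hx2⟩ ⟨hy1, hy2⟩
    refine ⟨fun i hi => ?_, ?_⟩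
    · show x i + y i = 0
      rw [hx1 i hi, hy1 i hi, add_zero]
    · show ∑ i, (x i + y i) = 0
      rw [Finset.sum_add_distrib, hx2, hy2, add_zero]
  zero_mem' := ⟨fun i _ => rfl, by simp⟩
  smul_mem' := by
    rintro c x ⟨h1, h2⟩
    refine ⟨fun i hi => ?_, ?_⟩
    · show c * x i = 0
      rw [h1 i hi, mul_zero]
    · show ∑ i, c * x i = 0
      rw [← Finset.mul_sum, h2, mul_zero]

lemma mem_W0 {F : Finset (Fin r)} {x : Fin r → ℝ} :
    x ∈ W0 F ↔ (∀ i, i ∉ F → x i = 0) ∧ ∑ i, x i = 0 := Iff.rfl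

lemma W0_mono {F F' : Finset (Fin r)} (h : F ⊆ F') : W0 F ≤ W0 F' := by
  rintro x ⟨h1, h2⟩
  exact ⟨fun i hi => h1 i fun hiF => hi (h hiF), h2⟩

lemma ev_sub_ev_mem_W0 {F : Finset (Fin r)} {i j : Fin r} (hi : i ∈ F) (hj : j ∈ F) :
    ev i - ev j ∈ W0 F := by
  refine ⟨fun a ha => ?_, ?_⟩
  · have h1 : a ≠ i := fun h => ha (h.symm ▸ hi)
    have h2 : a ≠ j := fun h => ha (h.symm ▸ hj)
    show ev i a - ev j a = 0
    rw [ev_apply, ev_apply, if_neg h1, if_neg h2, sub_zero]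
  · show ∑ a, (ev i a - ev j a) = 0
    rw [Finset.sum_sub_distrib, sum_ev, sum_ev, sub_self]

/-- H-description of the simplex -/
lemma mem_faceSimplex {F : Finset (Fin r)} {x : Fin r → ℝ} :
    x ∈ faceSimplex F ↔ (∀ i, 0 ≤ x i) ∧ (∀ i, i ∉ F → x i = 0) ∧ ∑ i, x i = 1 := by
  constructor
  · intro hx
    have hconv : Convex ℝ {y : Fin r → ℝ | (∀ i, 0 ≤ y i) ∧ (∀ i, i ∉ F → y i = 0) ∧
        ∑ i, y i = 1} := by
      rintro y ⟨hy1, hy2, hy3⟩ z ⟨hz1, hz2, hz3⟩ a b ha hb hab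
      refine ⟨fun i => ?_, fun i hi => ?_, ?_⟩ <;>
        simp only [Pi.add_apply, Pi.smul_apply, smul_eq_mul]
      · have := hy1 i; have := hz1 i; positivity
      · rw [hy2 i hi, hz2 i hi, mul_zero, mul_zero, add_zero]
      · rw [Finset.sum_add_distrib, ← Finset.mul_sum, ← Finset.mul_sum, hy3, hz3,
          mul_one, mul_one, hab]
    refine convexHull_min ?_ hconv hx
    rintro y ⟨i, hi, rfl⟩
    refine ⟨fun j => ?_, fun j hj => ?_, ?_⟩
    · simp only [Pi.single_apply]
      split <;> norm_num
    · simp only [Pi.single_apply]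
      rw [if_neg (show j ≠ i from fun h => hj (h.symm ▸ Finset.mem_coe.1 hi))]
    · simp [Pi.single_apply]
  · rintro ⟨h1, h2, h3⟩
    have hsumF : ∑ i ∈ F, x i = 1 := by
      rw [← h3]
      exact Finset.sum_subset (Finset.subset_univ F) (fun i _ hi => h2 i hi)
    have hx : x = F.centerMass x (fun i => (Pi.single i 1 : Fin r → ℝ)) := by
      rw [Finset.centerMass, hsumF, inv_one, one_smul]
      funext j
      rw [Finset.sum_apply]
      simp only [Pi.smul_apply, Pi.single_apply, smul_eq_mul, mul_ite, mul_one, mul_zero]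
      rw [Finset.sum_ite_eq F j x]
      by_cases hj : j ∈ F
      · rw [if_pos hj]
      · rw [if_neg hj, h2 j hj]
    rw [hx]
    exact Finset.centerMass_mem_convexHull _ (fun i _ => h1 i) (by rw [hsumF]; norm_num)
      (fun i hi => Set.mem_image_of_mem _ hi)

lemma faceSimplex_nonempty {F : Finset (Fin r)} (hF : F.Nonempty) :
    (faceSimplex F).Nonempty := by
  obtain ⟨i, hi⟩ := hF
  exact ⟨ev i, mem_faceSimplex.2 ⟨fun j => by rw [ev_apply]; positivity,
    fun j hj => by rw [ev_apply, if_neg (show j ≠ i from fun h => hj (h.symm ▸ hi))], sum_ev i⟩⟩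

/-- expansion of a vector in `W0 S` in terms of differences with a base point -/
lemma expand {S : Finset (Fin r)} {i₀ : Fin r} (h0 : i₀ ∈ S) {x : Fin r → ℝ}
    (hsupp : ∀ i, i ∉ S → x i = 0) (hsum : ∑ i, x i = 0) :
    x = ∑ i ∈ S, x i • (ev i - ev i₀) := by
  have hSsum : ∑ i ∈ S, x i = 0 := by
    rw [← hsum]
    exact Finset.sum_subset (Finset.subset_univ S) (fun i _ hi => hsupp i hi)
  funext j
  rw [Finset.sum_apply]
  simp only [Pi.smul_apply, Pi.sub_apply, smul_eq_mul, ev_apply, mul_sub, mul_ite,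
    mul_one, mul_zero]
  by_cases hj0 : j = i₀
  · simp only [hj0, if_pos rfl, if_true]
    rw [Finset.sum_sub_distrib, Finset.sum_ite_eq S i₀ x, if_pos h0, hSsum, sub_zero]
  · simp only [if_neg hj0, sub_zero]
    rw [Finset.sum_ite_eq S j x]
    by_cases hj : j ∈ S
    · rw [if_pos hj]
    · rw [if_neg hj, hsupp j hj]

lemma vectorSpan_faceSimplex (F : Finset (Fin r)) :
    vectorSpan ℝ (faceSimplex F) = W0 F := by
  have h1 : vectorSpan ℝ (faceSimplex F)
      = vectorSpan ℝ ((fun i => (Pi.single i 1 : Fin r → ℝ)) '' ↑F) := by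
    rw [← direction_affineSpan, ← direction_affineSpan, faceSimplex, affineSpan_convexHull]
  rw [h1]
  apply le_antisymm
  · rw [vectorSpan_def, Submodule.span_le]
    rintro v hv
    rw [Set.mem_vsub] at hv
    obtain ⟨p, hp, q, hq, rfl⟩ := hv
    obtain ⟨i, hi, rfl⟩ := hp
    obtain ⟨j, hj, rfl⟩ := hq
    exact ev_sub_ev_mem_W0 hi hj
  · rintro x ⟨h1', h2'⟩
    rcases F.eq_empty_or_nonempty with rfl | ⟨i₀, hi₀⟩
    · have : x = 0 := funext fun i => h1' i (Finset.notMem_empty i)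
      rw [this]; exact Submodule.zero_mem _
    · rw [expand hi₀ h1' h2']
      refine Submodule.sum_mem _ fun i hi => Submodule.smul_mem _ _ ?_
      have : (ev i : Fin r → ℝ) -ᵥ ev i₀ = ev i - ev i₀ := rfl
      rw [← this]
      exact vsub_mem_vectorSpan ℝ (Set.mem_image_of_mem _ hi) (Set.mem_image_of_mem _ hi₀)

def Supp (S : Finset (Fin r)) : Submodule ℝ (Fin r → ℝ) where
  carrier := {x | ∀ i, i ∉ S → x i = 0}
  add_mem' := by
    rintro x y hx hy i hi
    show x i + y i = 0
    rw [hx i hi, hy i hi, add_zero]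
  zero_mem' := fun i _ => rfl
  smul_mem' := by
    rintro c x hx i hi
    show c * x i = 0
    rw [hx i hi, mul_zero]

lemma W0_le_Supp (F : Finset (Fin r)) : W0 F ≤ Supp F := fun _ hx => hx.1

lemma Supp_mono {S T : Finset (Fin r)} (h : S ⊆ T) : Supp S ≤ Supp T :=
  fun _ hx i hi => hx i fun hiS => hi (h hiS)

lemma Supp_inf_compl (S : Finset (Fin r)) : Supp S ⊓ Supp Sᶜ = ⊥ := by
  rw [eq_bot_iff]
  rintro x ⟨hx1, hx2⟩
  have : x = 0 := by
    funext i
    by_cases hi : i ∈ S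
    · exact hx2 i (by simp [hi])
    · exact hx1 i hi
  simp [this]

lemma finrank_W0 {F : Finset (Fin r)} (hF : F.Nonempty) :
    Module.finrank ℝ (W0 F) = F.card - 1 := by
  classical
  obtain ⟨i₀, hi₀⟩ := hF
  set b : ↥(F.erase i₀) → (Fin r → ℝ) := fun i => ev i.1 - ev i₀ with hb
  have hspan : W0 F = Submodule.span ℝ (Set.range b) := by
    apply le_antisymm
    · rintro x ⟨h1, h2⟩
      rw [expand hi₀ h1 h2, ← Finset.sum_erase F
        (show x i₀ • (ev i₀ - ev i₀) = 0 by rw [sub_self, smul_zero])]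
      refine Submodule.sum_mem _ fun i hi => Submodule.smul_mem _ _ ?_
      exact Submodule.subset_span ⟨⟨i, hi⟩, rfl⟩
    · rw [Submodule.span_le]
      rintro v ⟨i, rfl⟩
      exact ev_sub_ev_mem_W0 (Finset.mem_of_mem_erase i.2) hi₀
  have hli : LinearIndependent ℝ b := by
    rw [Fintype.linearIndependent_iff]
    intro c hc i
    have hci := congrFun hc i.1
    rw [Finset.sum_apply] at hci
    have hterm : ∀ j : ↥(F.erase i₀), (c j • b j) i.1 = if j = i then c j else 0 := by
      intro j
      simp only [hb, Pi.smul_apply, Pi.sub_apply, smul_eq_mul, ev_apply]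
      rw [if_neg (show i.1 ≠ i₀ from (Finset.mem_erase.1 i.2).1), sub_zero]
      by_cases hji : j = i
      · rw [if_pos hji, if_pos (by rw [hji]), mul_one]
      · rw [if_neg hji, if_neg (fun h => hji (Subtype.ext h.symm)), mul_zero]
    rw [Finset.sum_congr rfl (fun j _ => hterm j), Finset.sum_ite_eq' Finset.univ i c,
      if_pos (Finset.mem_univ i)] at hci
    exact hci
  rw [hspan, finrank_span_eq_card hli, Fintype.card_coe, Finset.card_erase_of_mem hi₀]

lemma sumG_nonneg {F G : Finset (Fin r)} {x : Fin r → ℝ} (hx : x ∈ faceSimplex F) :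
    0 ≤ ∑ i ∈ G, x i :=
  Finset.sum_nonneg fun i _ => (mem_faceSimplex.1 hx).1 i

lemma sumG_of_subset {F G : Finset (Fin r)} {x : Fin r → ℝ} (hx : x ∈ faceSimplex F)
    (hFG : F ⊆ G) : ∑ i ∈ G, x i = 1 := by
  obtain ⟨h1, h2, h3⟩ := mem_faceSimplex.1 hx
  rw [← h3]
  exact Finset.sum_subset (Finset.subset_univ G) fun i _ hi => h2 i fun hiF => hi (hFG hiF)

lemma mem_faceSimplex_sdiff {F G : Finset (Fin r)} {x : Fin r → ℝ} :
    x ∈ faceSimplex (F \ G) ↔ x ∈ faceSimplex F ∧ ∑ i ∈ G, x i = 0 := by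
  rw [mem_faceSimplex, mem_faceSimplex]
  constructor
  · rintro ⟨h1, h2, h3⟩
    refine ⟨⟨h1, fun i hi => h2 i fun hmem => hi (Finset.mem_sdiff.1 hmem).1, h3⟩, ?_⟩
    exact Finset.sum_eq_zero fun i hi => h2 i fun hmem => (Finset.mem_sdiff.1 hmem).2 hi
  · rintro ⟨⟨h1, h2, h3⟩, hsum⟩
    refine ⟨h1, fun i hi => ?_, h3⟩
    by_cases hiF : i ∈ F
    · have hiG : i ∈ G := by
        by_contra hiG
        exact hi (Finset.mem_sdiff.2 ⟨hiF, hiG⟩)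
      exact (Finset.sum_eq_zero_iff_of_nonneg fun j _ => h1 j).1 hsum i hiG
    · exact h2 i hiF

/-- the projected family member -/
def pr (G F : Finset (Fin r)) : Finset (Fin r) := if F ⊆ G then F else F \ G

lemma pr_nonempty {G F : Finset (Fin r)} (hF : F ≠ ∅) : (pr G F).Nonempty := by
  rw [pr]
  split
  · exact Finset.nonempty_iff_ne_empty.2 hF
  · exact Finset.sdiff_nonempty.2 (by assumption)

lemma mem_pr_iff {G F : Finset (Fin r)} {x : Fin r → ℝ} :
    x ∈ faceSimplex (pr G F) ↔
      x ∈ faceSimplex F ∧ ∑ i ∈ G, x i = (if F ⊆ G then (1:ℝ) else 0) := by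
  rw [pr]
  by_cases h : F ⊆ G
  · rw [if_pos h, if_pos h]
    exact ⟨fun hx => ⟨hx, sumG_of_subset hx h⟩, fun hx => hx.1⟩
  · rw [if_neg h, if_neg h]
    exact mem_faceSimplex_sdiff

lemma slice_eq (𝓕 : Finset (Finset (Fin r))) (G : Finset (Fin r)) :
    {x ∈ minkSum 𝓕 | ∑ i ∈ G, x i = ((𝓕.filter fun F => F ⊆ G).card : ℝ)} =
      ∑ F ∈ 𝓕, faceSimplex (pr G F) := by
  have hmval : ∑ F ∈ 𝓕, (if F ⊆ G then (1:ℝ) else 0)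
      = ((𝓕.filter fun F => F ⊆ G).card : ℝ) := by
    rw [Finset.sum_boole]
  ext x
  rw [Set.mem_sep_iff]
  constructor
  · rintro ⟨hx, hsum⟩
    rw [minkSum, mem_finsetSum] at hx
    obtain ⟨g, hg, rfl⟩ := hx
    have hsum' : ∑ F ∈ 𝓕, ∑ i ∈ G, g F i = ((𝓕.filter fun F => F ⊆ G).card : ℝ) := by
      rw [← hsum, Finset.sum_comm]
      exact Finset.sum_congr rfl fun i _ => (Finset.sum_apply i 𝓕 g).symm
    have hle : ∀ F ∈ 𝓕, (if F ⊆ G then (1:ℝ) else 0) ≤ ∑ i ∈ G, g F i := by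
      intro F hF
      split
      · exact (sumG_of_subset (hg F hF) (by assumption)).ge
      · exact sumG_nonneg (hg F hF)
    have heq : ∀ F ∈ 𝓕, (if F ⊆ G then (1:ℝ) else 0) = ∑ i ∈ G, g F i :=
      (Finset.sum_eq_sum_iff_of_le hle).1 (hmval.trans hsum'.symm)
    rw [mem_finsetSum]
    exact ⟨g, fun F hF => mem_pr_iff.2 ⟨hg F hF, (heq F hF).symm⟩, rfl⟩
  · intro hx
    rw [mem_finsetSum] at hx
    obtain ⟨g, hg, rfl⟩ := hx
    have hg' : ∀ F ∈ 𝓕, g F ∈ faceSimplex F ∧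
        ∑ i ∈ G, g F i = (if F ⊆ G then (1:ℝ) else 0) :=
      fun F hF => mem_pr_iff.1 (hg F hF)
    constructor
    · rw [minkSum, mem_finsetSum]
      exact ⟨g, fun F hF => (hg' F hF).1, rfl⟩
    · calc ∑ i ∈ G, (∑ F ∈ 𝓕, g F) i = ∑ i ∈ G, ∑ F ∈ 𝓕, g F i :=
            Finset.sum_congr rfl fun i _ => Finset.sum_apply i 𝓕 g
        _ = ∑ F ∈ 𝓕, ∑ i ∈ G, g F i := Finset.sum_comm
        _ = ∑ F ∈ 𝓕, (if F ⊆ G then (1:ℝ) else 0) :=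
            Finset.sum_congr rfl fun F hF => (hg' F hF).2
        _ = _ := hmval

def stepRel (𝓕 : Finset (Finset (Fin r))) (G : Finset (Fin r)) (i j : Fin r) : Prop :=
  ∃ F ∈ 𝓕, F ⊆ G ∧ i ∈ F ∧ j ∈ F

/-- `G` is connected with respect to the hypergraph of members of `𝓕` inside `G`. -/
def IsConn (𝓕 : Finset (Finset (Fin r))) (G : Finset (Fin r)) : Prop :=
  G.Nonempty ∧ ∀ i ∈ G, ∀ j ∈ G, Relation.ReflTransGen (stepRel 𝓕 G) i j

lemma stepRel_symm {𝓕 : Finset (Finset (Fin r))} {G : Finset (Fin r)} :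
    Symmetric (stepRel 𝓕 G) := by
  rintro i j ⟨F, hF, hFG, hi, hj⟩
  exact ⟨F, hF, hFG, hj, hi⟩

lemma stepRel_mono {𝓕 : Finset (Finset (Fin r))} {G X : Finset (Fin r)} (h : G ⊆ X)
    {i j : Fin r} (hs : stepRel 𝓕 G i j) : stepRel 𝓕 X i j := by
  obtain ⟨F, hF, hFG, hi, hj⟩ := hs
  exact ⟨F, hF, hFG.trans h, hi, hj⟩

lemma isConn_mem {𝓕 : Finset (Finset (Fin r))} (h𝓕 : ∀ F ∈ 𝓕, F ≠ ∅)
    {F : Finset (Fin r)} (hF : F ∈ 𝓕) : IsConn 𝓕 F :=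
  ⟨Finset.nonempty_iff_ne_empty.2 (h𝓕 F hF),
    fun i hi j hj => Relation.ReflTransGen.single ⟨F, hF, subset_rfl, hi, hj⟩⟩

/-- the span of the simplices of members of `𝓕` inside `G` -/
noncomputable def WG (𝓕 : Finset (Finset (Fin r))) (G : Finset (Fin r)) :
    Submodule ℝ (Fin r → ℝ) :=
  (𝓕.filter fun F => F ⊆ G).sup fun F => W0 F

lemma WG_le_W0 (𝓕 : Finset (Finset (Fin r))) (G : Finset (Fin r)) : WG 𝓕 G ≤ W0 G :=
  Finset.sup_le fun F hF => W0_mono (Finset.mem_filter.1 hF).2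

lemma ev_sub_ev_mem_WG {𝓕 : Finset (Finset (Fin r))} {G : Finset (Fin r)} {i j : Fin r}
    (h : Relation.ReflTransGen (stepRel 𝓕 G) i j) : ev i - ev j ∈ WG 𝓕 G := by
  induction h with
  | refl => simp
  | @tail b c _ hbc ih =>
    have hdecomp : ev i - ev c = (ev i - ev b) + (ev b - ev c) := by abel
    rw [hdecomp]
    refine Submodule.add_mem _ ih ?_
    obtain ⟨F, hF, hFG, hb, hc⟩ := hbc
    have hle : W0 F ≤ WG 𝓕 G :=
      Finset.le_sup (f := fun F => W0 F) (Finset.mem_filter.2 ⟨hF, hFG⟩)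
    exact hle (ev_sub_ev_mem_W0 hb hc)

lemma W0_le_WG_of_conn {𝓕 : Finset (Finset (Fin r))} {G : Finset (Fin r)}
    (hc : IsConn 𝓕 G) : W0 G ≤ WG 𝓕 G := by
  obtain ⟨⟨i₀, hi₀⟩, hcon⟩ := hc
  rintro x ⟨h1, h2⟩
  rw [expand hi₀ h1 h2]
  exact Submodule.sum_mem _ fun i hi =>
    Submodule.smul_mem _ _ (ev_sub_ev_mem_WG (hcon i hi i₀ hi₀))

lemma conn_of_WG_eq {𝓕 : Finset (Finset (Fin r))} {G : Finset (Fin r)}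
    (hG : G.Nonempty) (h : WG 𝓕 G = W0 G) : IsConn 𝓕 G := by
  refine ⟨hG, ?_⟩
  by_contra hcon
  push_neg at hcon
  obtain ⟨i₀, hi₀, j₀, hj₀, hrel⟩ := hcon
  classical
  set A := G.filter (fun j => Relation.ReflTransGen (stepRel 𝓕 G) i₀ j) with hA
  set L : (Fin r → ℝ) →ₗ[ℝ] ℝ := ∑ i ∈ A, LinearMap.proj i with hL
  have hLapp : ∀ x : Fin r → ℝ, L x = ∑ i ∈ A, x i := by
    intro x
    rw [hL, LinearMap.sum_apply]
    exact Finset.sum_congr rfl fun i _ => rfl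
  have hWK : ∀ F ∈ 𝓕.filter (fun F => F ⊆ G), W0 F ≤ LinearMap.ker L := by
    intro F hF
    obtain ⟨hF𝓕, hFG⟩ := Finset.mem_filter.1 hF
    rintro x ⟨h1, h2⟩
    rw [LinearMap.mem_ker, hLapp]
    by_cases hmeet : ∃ a ∈ F, a ∈ A
    · have hFA : F ⊆ A := by
        obtain ⟨a, haF, haA⟩ := hmeet
        intro b hbF
        have hrel_a : Relation.ReflTransGen (stepRel 𝓕 G) i₀ a :=
          (Finset.mem_filter.1 haA).2
        exact Finset.mem_filter.2 ⟨hFG hbF, hrel_a.tail ⟨F, hF𝓕, hFG, haF, hbF⟩⟩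
      rw [Finset.sum_subset (Finset.subset_univ A)
        (fun i _ hi => h1 i (fun hiF => hi (hFA hiF)))]
      exact h2
    · push_neg at hmeet
      exact Finset.sum_eq_zero fun i hiA => h1 i (fun hiF => hmeet i hiF hiA)
  have hker : WG 𝓕 G ≤ LinearMap.ker L := Finset.sup_le hWK
  have hmem : ev j₀ - ev i₀ ∈ WG 𝓕 G := h.symm ▸ ev_sub_ev_mem_W0 hj₀ hi₀
  have hzero := hker hmem
  rw [LinearMap.mem_ker, hLapp] at hzero
  have hi₀A : i₀ ∈ A := Finset.mem_filter.2 ⟨hi₀, Relation.ReflTransGen.refl⟩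
  have hj₀A : j₀ ∉ A := fun hj => hrel (Finset.mem_filter.1 hj).2
  have hval : ∑ i ∈ A, (ev j₀ - ev i₀) i = -1 := by
    have hterm : ∀ i ∈ A, (ev j₀ - ev i₀) i
        = (if i = j₀ then (1:ℝ) else 0) - (if i = i₀ then (1:ℝ) else 0) := by
      intro i _
      show ev j₀ i - ev i₀ i = _
      rw [ev_apply, ev_apply]
    rw [Finset.sum_congr rfl hterm, Finset.sum_sub_distrib,
      Finset.sum_ite_eq' A j₀ (fun _ => (1:ℝ)), Finset.sum_ite_eq' A i₀ (fun _ => (1:ℝ)),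
      if_neg hj₀A, if_pos hi₀A]
    norm_num
  rw [hval] at hzero
  norm_num at hzero

lemma isConn_mem_building {𝓕 : Finset (Finset (Fin r))} {𝓗 : Set (Finset (Fin r))}
    (hB : BoolBuilding 𝓗) (hsub : ↑𝓕 ⊆ 𝓗) {G : Finset (Fin r)} (hG : IsConn 𝓕 G) :
    G ∈ 𝓗 := by
  classical
  obtain ⟨hGne, hcon⟩ := hG
  obtain ⟨k, g, hinj, hmem, hmax, hcov, e, he⟩ :=
    hB.2 G (Finset.nonempty_iff_ne_empty.1 hGne)
  -- uniqueness of blocks containing a point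
  have huniq : ∀ {m m' : Fin k} {a : Fin r}, a ∈ g m → a ∈ g m' → m = m' := by
    intro m m' a ham ham'
    by_contra hne
    have h1 : ({a} : Finset (Fin r)) ⊆ g m := Finset.singleton_subset_iff.2 ham
    have h2 : ({a} : Finset (Fin r)) ⊆ g m' := Finset.singleton_subset_iff.2 ham'
    set y1 : ∀ i : Fin k, {F : Finset (Fin r) // F ⊆ g i} :=
      fun i => if h : i = m then ⟨{a}, by rw [h]; exact h1⟩
        else ⟨∅, Finset.empty_subset _⟩ with hy1
    set y2 : ∀ i : Fin k, {F : Finset (Fin r) // F ⊆ g i} :=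
      fun i => if h : i = m' then ⟨{a}, by rw [h]; exact h2⟩
        else ⟨∅, Finset.empty_subset _⟩ with hy2
    have hsup : ∀ (y : ∀ i : Fin k, {F : Finset (Fin r) // F ⊆ g i}) (m₀ : Fin k),
        (∀ i, (y i).1 = if i = m₀ then {a} else ∅) →
        (Finset.univ.sup fun i => (y i).1) = {a} := by
      intro y m₀ hy
      apply le_antisymm
      · refine Finset.sup_le fun i _ => ?_
        rw [hy i]
        split
        · exact subset_rfl
        · exact Finset.empty_subset _
      · have hle : (y m₀).1 ≤ Finset.univ.sup fun i => (y i).1 :=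
          Finset.le_sup (f := fun i => ((y i : Finset (Fin r)))) (Finset.mem_univ m₀)
        rw [hy m₀, if_pos rfl] at hle
        exact hle
    have hv1 : (e y1).1 = {a} := by
      rw [he y1]
      refine hsup y1 m fun i => ?_
      simp only [hy1]
      by_cases h : i = m
      · rw [dif_pos h, if_pos h]
      · rw [dif_neg h, if_neg h]
    have hv2 : (e y2).1 = {a} := by
      rw [he y2]
      refine hsup y2 m' fun i => ?_
      simp only [hy2]
      by_cases h : i = m'
      · rw [dif_pos h, if_pos h]
      · rw [dif_neg h, if_neg h]
    have hee : e y1 = e y2 := Subtype.ext (hv1.trans hv2.symm)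
    have hyy : y1 = y2 := e.injective hee
    have hcontr := congrFun hyy m
    have hval1 : (y1 m).1 = {a} := by simp [hy1]
    have hval2 : (y2 m).1 = ∅ := by simp [hy2, hne]
    have hfin : ({a} : Finset (Fin r)) = ∅ := by
      rw [← hval1, ← hval2, hcontr]
    exact Finset.singleton_ne_empty a hfin
  -- k is positive
  have hk : 0 < k := by
    rcases Nat.eq_zero_or_pos k with hk0 | hk
    · exfalso
      obtain ⟨y, hy⟩ := e.surjective ⟨G, subset_rfl⟩
      have hGeq : G = Finset.univ.sup fun i => (y i).1 := by
        have := he y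
        rw [hy] at this
        exact this
      subst hk0
      rw [Finset.univ_eq_empty, Finset.sup_empty] at hGeq
      exact (Finset.nonempty_iff_ne_empty.1 hGne) hGeq
    · exact hk
  set z : Fin k := ⟨0, hk⟩
  -- cover
  have hcover : ∀ a ∈ G, ∃ m, a ∈ g m := by
    intro a ha
    obtain ⟨y, hy⟩ := e.surjective ⟨G, subset_rfl⟩
    have hGeq : G = Finset.univ.sup fun i => (y i).1 := by
      have := he y
      rw [hy] at this
      exact this
    rw [hGeq] at ha
    obtain ⟨m, -, ham⟩ := Finset.mem_sup.1 ha
    exact ⟨m, (y m).2 ham⟩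
  -- paths stay in a block
  have hstay : ∀ a b, Relation.ReflTransGen (stepRel 𝓕 G) a b → a ∈ g z → b ∈ g z := by
    intro a b hab ha
    induction hab with
    | refl => exact ha
    | @tail p q hap hpq ih =>
      obtain ⟨F, hF𝓕, hFG, hp, hq⟩ := hpq
      obtain ⟨m, hm⟩ := hcov F (hsub hF𝓕) hFG
      have hmz : m = z := huniq (hm hp) ih
      rw [← hmz]
      exact hm hq
  -- the block z is nonempty
  have hzne : (g z).Nonempty :=
    Finset.nonempty_iff_ne_empty.2 (hB.1 (g z) (hmem z).1)
  obtain ⟨x₀, hx₀⟩ := hzne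
  have hx₀G : x₀ ∈ G := (hmem z).2 hx₀
  have hGsub : G ⊆ g z := fun b hb => hstay x₀ b (hcon x₀ hx₀G b hb) hx₀
  have hGeq : G = g z := Finset.Subset.antisymm hGsub (hmem z).2
  rw [hGeq]
  exact (hmem z).1

open scoped Classical in
lemma boolBuilding_isConn (𝓕 : Finset (Finset (Fin r))) :
    BoolBuilding {G : Finset (Fin r) | IsConn 𝓕 G} := by
  constructor
  · exact fun F hF => Finset.nonempty_iff_ne_empty.1 hF.1
  · intro X hXne
    set rel : Fin r → Fin r → Prop := Relation.ReflTransGen (stepRel 𝓕 X) with hrel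
    have hrsymm : ∀ {a b}, rel a b → rel b a :=
      fun h => by
        have : Std.Symm (stepRel 𝓕 X) := ⟨fun _ _ hs => stepRel_symm hs⟩
        exact Std.Symm.symm _ _ h
    set Cl : Fin r → Finset (Fin r) := fun i => X.filter (rel i) with hCl
    have hmemCl : ∀ i ∈ X, i ∈ Cl i :=
      fun i hi => Finset.mem_filter.2 ⟨hi, Relation.ReflTransGen.refl⟩
    have hClsub : ∀ i, Cl i ⊆ X := fun i => Finset.filter_subset _ _
    have hCl_rel : ∀ {i j}, j ∈ Cl i → rel i j := fun h => (Finset.mem_filter.1 h).2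
    have hCl_eq : ∀ {i j}, rel i j → Cl i = Cl j := by
      intro i j hij
      ext a
      simp only [hCl, Finset.mem_filter, and_congr_right_iff]
      intro _
      exact ⟨fun h => (hrsymm hij).trans h, fun h => hij.trans h⟩
    -- classes are connected
    have hkeyconn : ∀ i a b, rel a b → a ∈ Cl i →
        Relation.ReflTransGen (stepRel 𝓕 (Cl i)) a b ∧ b ∈ Cl i := by
      intro i a b hab ha
      induction hab with
      | refl => exact ⟨Relation.ReflTransGen.refl, ha⟩
      | @tail p q hap hpq ih =>
        obtain ⟨hchain, hpCl⟩ := ih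
        obtain ⟨F, hF𝓕, hFX, hp, hq⟩ := hpq
        have hFCl : F ⊆ Cl i := by
          intro c hc
          refine Finset.mem_filter.2 ⟨hFX hc, ?_⟩
          exact (hCl_rel hpCl).trans (Relation.ReflTransGen.single ⟨F, hF𝓕, hFX, hp, hc⟩)
        refine ⟨hchain.tail ⟨F, hF𝓕, hFCl, hp, hq⟩, hFCl hq⟩
    have hconnCl : ∀ i ∈ X, IsConn 𝓕 (Cl i) := by
      intro i hi
      refine ⟨⟨i, hmemCl i hi⟩, fun a ha b hb => ?_⟩
      have hab : rel a b := (hrsymm (hCl_rel ha)).trans (hCl_rel hb)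
      exact (hkeyconn i a b hab ha).1
    -- connected subsets of X lie in a class
    have hsubCl : ∀ H, IsConn 𝓕 H → H ⊆ X → ∀ a ∈ H, H ⊆ Cl a := by
      intro H hH hHX a ha b hb
      refine Finset.mem_filter.2 ⟨hHX hb, ?_⟩
      exact Relation.ReflTransGen.mono (fun p q hs => stepRel_mono hHX hs) _ _ (hH.2 a ha b hb)
    set P : Finset (Finset (Fin r)) := X.image Cl with hP
    set g : Fin P.card → Finset (Fin r) :=
      fun m => (P.equivFin.symm m : Finset (Fin r)) with hg
    have hgP : ∀ m, g m ∈ P := fun m => (P.equivFin.symm m).2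
    have hgrep : ∀ m, ∃ i ∈ X, Cl i = g m := fun m => Finset.mem_image.1 (hgP m)
    have hgsubX : ∀ m, g m ⊆ X := by
      intro m
      obtain ⟨i, hiX, hCli⟩ := hgrep m
      rw [← hCli]
      exact hClsub i
    have hginj : Function.Injective g :=
      fun m m' hmm => P.equivFin.symm.injective (Subtype.ext hmm)
    have huniq : ∀ {m m' : Fin P.card} {a : Fin r}, a ∈ g m → a ∈ g m' → m = m' := by
      intro m m' a ham ham'
      obtain ⟨i, hiX, hCli⟩ := hgrep m
      obtain ⟨j, hjX, hClj⟩ := hgrep m'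
      rw [← hCli] at ham
      rw [← hClj] at ham'
      have hij : rel i j := (hCl_rel ham).trans (hrsymm (hCl_rel ham'))
      have : g m = g m' := by rw [← hCli, ← hClj, hCl_eq hij]
      exact hginj this
    have hcoverX : Finset.univ.sup g = X := by
      apply Finset.Subset.antisymm
      · exact Finset.sup_le fun m _ => hgsubX m
      · intro a ha
        have hClP : Cl a ∈ P := by rw [hP]; exact Finset.mem_image_of_mem Cl ha
        refine Finset.mem_sup.2 ⟨P.equivFin ⟨Cl a, hClP⟩, Finset.mem_univ _, ?_⟩
        simp only [hg, Equiv.symm_apply_apply]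
        exact hmemCl a ha
    have hkey : ∀ (y : ∀ m : Fin P.card, {F : Finset (Fin r) // F ⊆ g m}) (m : Fin P.card),
        (Finset.univ.sup fun j => (y j).1) ∩ g m = (y m).1 := by
      intro y m
      apply Finset.Subset.antisymm
      · intro a ha
        obtain ⟨hasup, ham⟩ := Finset.mem_inter.1 ha
        obtain ⟨j, -, haj⟩ := Finset.mem_sup.1 hasup
        have hjm : j = m := huniq ((y j).2 haj) ham
        exact hjm ▸ haj
      · intro a ha
        exact Finset.mem_inter.2 ⟨Finset.mem_sup.2 ⟨m, Finset.mem_univ m, ha⟩, (y m).2 ha⟩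
    refine ⟨P.card, g, hginj, ?_, ?_, ?_, ?_⟩
    · intro m
      obtain ⟨i, hiX, hCli⟩ := hgrep m
      constructor
      · show IsConn 𝓕 (g m)
        rw [← hCli]
        exact hconnCl i hiX
      · exact hgsubX m
    · intro m H hH hHX hgH
      obtain ⟨i, hiX, hCli⟩ := hgrep m
      have higm : i ∈ g m := by rw [← hCli]; exact hmemCl i hiX
      have hiH : i ∈ H := hgH higm
      have hHCl : H ⊆ Cl i := hsubCl H hH hHX i hiH
      exact Finset.Subset.antisymm hgH (fun b hb => hCli ▸ hHCl hb)
    · intro H hH hHX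
      obtain ⟨a, ha⟩ := hH.1
      have haX : a ∈ X := hHX ha
      have hClP : Cl a ∈ P := by rw [hP]; exact Finset.mem_image_of_mem Cl haX
      refine ⟨P.equivFin ⟨Cl a, hClP⟩, ?_⟩
      have hgval : g (P.equivFin ⟨Cl a, hClP⟩) = Cl a := by
        simp only [hg, Equiv.symm_apply_apply]
      rw [hgval]
      exact hsubCl H hH hHX a ha
    · refine ⟨⟨⟨fun y => ⟨Finset.univ.sup fun m => (y m).1,
          Finset.sup_le fun m _ => ((y m).2).trans (hgsubX m)⟩,
        fun F m => ⟨F.1 ∩ g m, Finset.inter_subset_right⟩, ?_, ?_⟩, ?_⟩, fun y => rfl⟩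
      · intro y
        funext m
        exact Subtype.ext (hkey y m)
      · intro F
        apply Subtype.ext
        show (Finset.univ.sup fun m => F.1 ∩ g m) = F.1
        apply Finset.Subset.antisymm
        · exact Finset.sup_le fun m _ => (Finset.inter_subset_left : F.1 ∩ g m ⊆ F.1)
        · intro a ha
          have haX : a ∈ X := F.2 ha
          have hasup : a ∈ Finset.univ.sup g := by rw [hcoverX]; exact haX
          obtain ⟨m, -, ham⟩ := Finset.mem_sup.1 hasup
          exact Finset.mem_sup.2 ⟨m, Finset.mem_univ m, Finset.mem_inter.2 ⟨ha, ham⟩⟩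
      · intro y y'
        constructor
        · intro hle m
          have hle' : (Finset.univ.sup fun j => (y j).1)
              ⊆ (Finset.univ.sup fun j => (y' j).1) := hle
          have h1 : (y m).1 ⊆ (y' m).1 := by
            rw [← hkey y m, ← hkey y' m]
            exact Finset.inter_subset_inter hle' subset_rfl
          exact h1
        · intro hle
          show (Finset.univ.sup fun m => (y m).1) ≤ Finset.univ.sup fun m => (y' m).1
          exact Finset.sup_mono_fun fun m _ => hle m


lemma mem_hat_iff_isConn {𝓕 : Finset (Finset (Fin r))} (h : ∀ F ∈ 𝓕, F ≠ ∅)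
    {𝓕hat : Set (Finset (Fin r))}
    (hhat : BoolBuilding 𝓕hat ∧ ↑𝓕 ⊆ 𝓕hat ∧
      ∀ 𝓗 : Set (Finset (Fin r)), BoolBuilding 𝓗 → ↑𝓕 ⊆ 𝓗 → 𝓕hat ⊆ 𝓗)
    {G : Finset (Fin r)} : G ∈ 𝓕hat ↔ IsConn 𝓕 G := by
  constructor
  · intro hG
    exact hhat.2.2 {G | IsConn 𝓕 G} (boolBuilding_isConn 𝓕)
      (fun F hF => isConn_mem h (Finset.mem_coe.1 hF)) hG
  · intro hG
    exact isConn_mem_building hhat.1 hhat.2.1 hG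

lemma vectorSpan_minkSum (𝓕 : Finset (Finset (Fin r))) (h : ∀ F ∈ 𝓕, F ≠ ∅) :
    vectorSpan ℝ (minkSum 𝓕) = 𝓕.sup fun F => W0 F := by
  rw [minkSum, vectorSpan_finsetSum _ _
    (fun F hF => faceSimplex_nonempty (Finset.nonempty_iff_ne_empty.2 (h F hF)))]
  exact Finset.sup_congr rfl fun F _ => vectorSpan_faceSimplex F

lemma face_vectorSpan (𝓕 : Finset (Finset (Fin r))) (h : ∀ F ∈ 𝓕, F ≠ ∅)
    (htop : Finset.univ ∈ 𝓕) (G : Finset (Fin r)) (hGu : G ≠ Finset.univ) :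
    vectorSpan ℝ {x ∈ minkSum 𝓕 |
        ∑ i ∈ G, x i = ((𝓕.filter fun F => F ⊆ G).card : ℝ)}
      = WG 𝓕 G ⊔ W0 Gᶜ := by
  rw [slice_eq, vectorSpan_finsetSum _ _
    (fun F hF => faceSimplex_nonempty (pr_nonempty (h F hF))),
    Finset.sup_congr rfl (fun F _ => vectorSpan_faceSimplex (pr G F))]
  apply le_antisymm
  · refine Finset.sup_le fun F hF => ?_
    rw [pr]
    split
    · refine le_trans ?_ le_sup_left
      exact Finset.le_sup (f := fun F => W0 F)
        (Finset.mem_filter.2 ⟨hF, by assumption⟩)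
    · refine le_trans (W0_mono ?_) le_sup_right
      intro a ha
      exact Finset.mem_compl.2 (Finset.mem_sdiff.1 ha).2
  · refine sup_le ?_ ?_
    · refine Finset.sup_le fun F hF => ?_
      obtain ⟨hF𝓕, hFG⟩ := Finset.mem_filter.1 hF
      have hpr : pr G F = F := if_pos hFG
      have := Finset.le_sup (f := fun F => W0 (pr G F)) hF𝓕
      simp only [hpr] at this
      exact this
    · have hpru : pr G Finset.univ = Gᶜ := by
        rw [pr, if_neg (fun hsub => hGu (Finset.Subset.antisymm (Finset.subset_univ G) hsub)),
          Finset.compl_eq_univ_sdiff]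
      have := Finset.le_sup (f := fun F => W0 (pr G F)) htop
      simp only [hpru] at this
      exact this

lemma finrank_sup_disjoint (𝓕 : Finset (Finset (Fin r))) (G : Finset (Fin r))
    (hGu : G ≠ Finset.univ) :
    Module.finrank ℝ (WG 𝓕 G ⊔ W0 Gᶜ : Submodule ℝ (Fin r → ℝ))
      = Module.finrank ℝ (WG 𝓕 G) + (r - G.card - 1) := by
  have hdisj : WG 𝓕 G ⊓ W0 Gᶜ = ⊥ := by
    rw [eq_bot_iff]
    refine le_trans (inf_le_inf ((WG_le_W0 𝓕 G).trans (W0_le_Supp G)) (W0_le_Supp Gᶜ)) ?_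
    rw [Supp_inf_compl G]
  have hGc : (Gᶜ : Finset (Fin r)).Nonempty := by
    rw [Finset.nonempty_iff_ne_empty]
    intro hc
    exact hGu (by simpa using congrArg compl hc)
  have hadd := Submodule.finrank_sup_add_finrank_inf_eq (WG 𝓕 G) (W0 Gᶜ)
  rw [hdisj, finrank_bot, add_zero, finrank_W0 hGc, Finset.card_compl,
    Fintype.card_fin] at hadd
  omega

theorem main {r : ℕ} (𝓕 : Finset (Finset (Fin r))) (h : ∀ F ∈ 𝓕, F ≠ ∅)
    (htop : Finset.univ ∈ 𝓕) (𝓕hat : Set (Finset (Fin r)))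
    (hhat : BoolBuilding 𝓕hat ∧ ↑𝓕 ⊆ 𝓕hat ∧
      ∀ 𝓗 : Set (Finset (Fin r)), BoolBuilding 𝓗 → ↑𝓕 ⊆ 𝓗 → 𝓕hat ⊆ 𝓗) :
    Module.finrank ℝ (affineSpan ℝ (minkSum 𝓕)).direction = r - 1 ∧
    ∀ G : Finset (Fin r), G ≠ ∅ → G ≠ Finset.univ →
      (Module.finrank ℝ (affineSpan ℝ
          {x ∈ minkSum 𝓕 |
            ∑ i ∈ G, x i = ((𝓕.filter fun F => F ⊆ G).card : ℝ)}).direction = r - 2 ↔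
        G ∈ 𝓕hat) := by
  have huniv : (Finset.univ : Finset (Fin r)).Nonempty :=
    Finset.nonempty_iff_ne_empty.2 (h _ htop)
  constructor
  · rw [direction_affineSpan, vectorSpan_minkSum 𝓕 h]
    have hsup : 𝓕.sup (fun F => W0 F) = W0 (Finset.univ : Finset (Fin r)) :=
      le_antisymm (Finset.sup_le fun F _ => W0_mono (Finset.subset_univ F))
        (Finset.le_sup (f := fun F => W0 F) htop)
    rw [hsup, finrank_W0 huniv, Finset.card_univ, Fintype.card_fin]
  · intro G hG0 hGu
    have hGne : G.Nonempty := Finset.nonempty_iff_ne_empty.2 hG0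
    have hcard1 : 1 ≤ G.card := Finset.Nonempty.card_pos hGne
    have hcardlt : G.card < r := by
      have h1 : G.card ≤ r := by
        have := Finset.card_le_univ G
        rwa [Fintype.card_fin] at this
      have h2 : G.card ≠ r := fun hc =>
        hGu (Finset.eq_univ_of_card G (by rw [hc, Fintype.card_fin]))
      omega
    have hle : Module.finrank ℝ (WG 𝓕 G) ≤ G.card - 1 := by
      have := Submodule.finrank_mono (WG_le_W0 𝓕 G)
      rwa [finrank_W0 hGne] at this
    rw [direction_affineSpan, face_vectorSpan 𝓕 h htop G hGu,
      finrank_sup_disjoint 𝓕 G hGu, mem_hat_iff_isConn h hhat]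
    constructor
    · intro heq
      have hfr : Module.finrank ℝ (WG 𝓕 G) = G.card - 1 := by omega
      have hWeq : WG 𝓕 G = W0 G :=
        Submodule.eq_of_le_of_finrank_eq (WG_le_W0 𝓕 G)
          (by rw [finrank_W0 hGne, hfr])
      exact conn_of_WG_eq hGne hWeq
    · intro hconn
      have hWeq : WG 𝓕 G = W0 G :=
        le_antisymm (WG_le_W0 𝓕 G) (W0_le_WG_of_conn hconn)
      rw [hWeq, finrank_W0 hGne]
      omega

end Statement10Aux

/-- If `[r] ∈ 𝓕` (members nonempty), then `Δ_𝓕` has dimension `r - 1`,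
and for every nonempty proper `G ⊊ [r]` the face of `Δ_𝓕` where `∑_{i∈G} x_i` equals
`#{F ∈ 𝓕 : F ⊆ G}` is a facet (has dimension `r - 2`) iff `G` lies in the building
closure `𝓕hat` of `𝓕`. -/
theorem statement10 {r : ℕ} (𝓕 : Finset (Finset (Fin r))) (h : ∀ F ∈ 𝓕, F ≠ ∅)
    (htop : Finset.univ ∈ 𝓕) (𝓕hat : Set (Finset (Fin r)))
    (hhat : BoolBuilding 𝓕hat ∧ ↑𝓕 ⊆ 𝓕hat ∧
      ∀ 𝓗 : Set (Finset (Fin r)), BoolBuilding 𝓗 → ↑𝓕 ⊆ 𝓗 → 𝓕hat ⊆ 𝓗) :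
    Module.finrank ℝ (affineSpan ℝ (minkSum 𝓕)).direction = r - 1 ∧
    ∀ G : Finset (Fin r), G ≠ ∅ → G ≠ Finset.univ →
      (Module.finrank ℝ (affineSpan ℝ
          {x ∈ minkSum 𝓕 |
            ∑ i ∈ G, x i = ((𝓕.filter fun F => F ⊆ G).card : ℝ)}).direction = r - 2 ↔
        G ∈ 𝓕hat) :=
  Statement10Aux.main 𝓕 h htop 𝓕hat hhat
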